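/- Let ν : (0,∞) → ℝ be a convex function with minimum m attained at x₀, and suppose: (a) {ν ≤ m+1} ⊇ [x₀ − δ₀, x₀ + δ₀] for some δ₀ > 0, and (b) {ν ≤ m+1} = [y−δ, y+δ] with δ ≤ Ke^{m/2} for a constant K. If ∫₀^∞ e^{−ν(x)} dx = V, then 2δ₀·e^{−m−1} ≤ V ≤ 2Ke·e^{−m/2}, hence m is bounded above and below in terms of V, δ₀, K only. -/

import Mathlib

open MeasureTheory Set Real

lemma aux_conv (ν : ℝ → ℝ) (m x₀ x : ℝ)
    (hconv : ConvexOn ℝ (Set.Ioi 0) ν)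
    (hx₀ : 0 < x₀) (hx : 0 < x) (hm : ν x₀ = m) (hs : 1 < ν x - m) :
    0 < x₀ + (x - x₀) / (ν x - m) ∧ ν (x₀ + (x - x₀) / (ν x - m)) ≤ m + 1 := by
  set s := ν x - m with hsdef
  have hs0 : 0 < s := by linarith
  have hinv : s⁻¹ * s = 1 := inv_mul_cancel₀ hs0.ne'
  have hinv1 : s⁻¹ ≤ 1 := by nlinarith [inv_pos.2 hs0]
  have hinv0 : 0 < s⁻¹ := inv_pos.2 hs0
  have hz : x₀ + (x - x₀) / s = (1 - s⁻¹) • x₀ + s⁻¹ • x := by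
    simp only [smul_eq_mul]
    field_simp
    ring
  constructor
  · rw [hz]
    have h1 : 0 ≤ (1 - s⁻¹) • x₀ := by
      simp only [smul_eq_mul]; nlinarith
    have h2 : 0 < s⁻¹ • x := by simp only [smul_eq_mul]; positivity
    linarith
  · rw [hz]
    have := hconv.2 (Set.mem_Ioi.2 hx₀) (Set.mem_Ioi.2 hx)
      (by linarith : (0:ℝ) ≤ 1 - s⁻¹) hinv0.le (by ring)
    simp only [smul_eq_mul] at this
    have hνx : ν x = m + s := by rw [hsdef]; ring
    rw [hm, hνx] at this
    simp only [smul_eq_mul]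
    nlinarith [this, hinv]

/-- Two-sided bound on V = ∫₀^∞ e^{−ν} in terms of the minimum value m of the convex
potential ν, the inner radius δ₀ and the width bound δ ≤ K·e^{m/2} of the sublevel
set {ν ≤ m+1}: 2δ₀·e^{−m−1} ≤ V ≤ 2K·e·e^{−m/2}. -/
theorem stmt_12 (ν : ℝ → ℝ) (m x₀ y δ δ₀ K V : ℝ)
    (hconv : ConvexOn ℝ (Set.Ioi 0) ν)
    (hx₀ : x₀ ∈ Set.Ioi (0:ℝ))
    (hmin : ∀ x ∈ Set.Ioi (0:ℝ), m ≤ ν x) (hm : ν x₀ = m)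
    (hδ₀ : 0 < δ₀)
    (hincl : Set.Icc (x₀ - δ₀) (x₀ + δ₀) ⊆ {x ∈ Set.Ioi (0:ℝ) | ν x ≤ m + 1})
    (hlevel : {x ∈ Set.Ioi (0:ℝ) | ν x ≤ m + 1} = Set.Icc (y - δ) (y + δ))
    (hδK : δ ≤ K * Real.exp (m / 2))
    (hV : (∫ x in Set.Ioi (0:ℝ), Real.exp (-(ν x))) = V) :
    2 * δ₀ * Real.exp (-m - 1) ≤ V ∧ V ≤ 2 * K * Real.exp 1 * Real.exp (-m / 2) := by
  have hx₀' : (0:ℝ) < x₀ := hx₀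
  set f : ℝ → ℝ := fun x => Real.exp (-(ν x)) with hfdef
  have hx₀lev : x₀ ∈ Set.Icc (y - δ) (y + δ) := by
    rw [← hlevel]; exact ⟨hx₀, by rw [hm]; linarith⟩
  have hδ0 : 0 ≤ δ := by
    have h1 := hx₀lev.1; have h2 := hx₀lev.2; linarith
  have hsub : Set.Icc (x₀ - δ₀) (x₀ + δ₀) ⊆ Set.Icc (y - δ) (y + δ) := by
    rw [← hlevel]; exact hincl
  have hbend : x₀ + δ₀ ≤ y + δ :=
    (hsub ⟨by linarith, le_refl _⟩).2
  have hcend : y - δ ≤ x₀ - δ₀ :=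
    (hsub ⟨le_refl _, by linarith⟩).1
  set b := y + δ - x₀ with hbdef
  set c := x₀ - (y - δ) with hcdef
  have hb0 : 0 < b := by simp only [hbdef]; linarith
  have hc0 : 0 < c := by simp only [hcdef]; linarith
  have hbc : b + c = 2 * δ := by simp only [hbdef, hcdef]; ring
  have hylev : 0 < y - δ := by
    have h : (y - δ) ∈ {x ∈ Set.Ioi (0:ℝ) | ν x ≤ m + 1} := by
      rw [hlevel]; exact ⟨le_refl _, by linarith⟩
    exact h.1
  -- membership characterization
  have hmem : ∀ x : ℝ, 0 < x → ν x ≤ m + 1 → y - δ ≤ x ∧ x ≤ y + δ := by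
    intro x hx hxν
    have h : x ∈ Set.Icc (y - δ) (y + δ) := by rw [← hlevel]; exact ⟨hx, hxν⟩
    exact ⟨h.1, h.2⟩
  -- pointwise lower bound on the right
  have hright : ∀ x : ℝ, y + δ < x → m + (x - x₀) / b ≤ ν x := by
    intro x hx
    have hxpos : 0 < x := lt_trans (by linarith) hx
    have hs : 1 < ν x - m := by
      by_contra h
      push_neg at h
      exact absurd (hmem x hxpos (by linarith)).2 (not_le.2 hx)
    obtain ⟨hz0, hzν⟩ := aux_conv ν m x₀ x hconv hx₀' hxpos hm hs
    have hzle : x₀ + (x - x₀) / (ν x - m) ≤ y + δ := (hmem _ hz0 hzν).2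
    have hs0 : (0:ℝ) < ν x - m := by linarith
    have h1 : x - x₀ ≤ b * (ν x - m) := by
      have := (div_le_iff₀ hs0).1 (by linarith : (x - x₀) / (ν x - m) ≤ b)
      linarith [this]
    have h2 : (x - x₀) / b ≤ ν x - m := (div_le_iff₀ hb0).2 (by nlinarith)
    linarith
  -- pointwise lower bound on the left
  have hleft : ∀ x : ℝ, 0 < x → x < y - δ → m + (x₀ - x) / c ≤ ν x := by
    intro x hxpos hx
    have hs : 1 < ν x - m := by
      by_contra h
      push_neg at h
      exact absurd (hmem x hxpos (by linarith)).1 (not_le.2 hx)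
    obtain ⟨hz0, hzν⟩ := aux_conv ν m x₀ x hconv hx₀' hxpos hm hs
    have hzge : y - δ ≤ x₀ + (x - x₀) / (ν x - m) := (hmem _ hz0 hzν).1
    have hs0 : (0:ℝ) < ν x - m := by linarith
    have h1 : -c ≤ (x - x₀) / (ν x - m) := by linarith
    have h1' : -c * (ν x - m) ≤ x - x₀ := (le_div_iff₀ hs0).1 h1
    have h2 : (x₀ - x) / c ≤ ν x - m := (div_le_iff₀ hc0).2 (by nlinarith)
    linarith
  -- continuity and measurability
  have hcont : ContinuousOn f (Set.Ioi 0) :=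
    Real.continuous_exp.comp_continuousOn (hconv.continuousOn isOpen_Ioi).neg
  have hmeas : ∀ s : Set ℝ, MeasurableSet s → s ⊆ Set.Ioi 0 →
      AEStronglyMeasurable f (volume.restrict s) := fun s hs hss =>
    (hcont.mono hss).aestronglyMeasurable hs
  have hfpos : ∀ x, 0 < f x := fun x => Real.exp_pos _
  -- integrability: middle
  have hint_mid : IntegrableOn f (Set.Ioc (y - δ) (y + δ)) := by
    refine Integrable.mono' (g := fun _ => Real.exp (-m))
      (integrableOn_const measure_Ioc_lt_top.ne)
      (hmeas _ measurableSet_Ioc (fun x hx => lt_trans hylev hx.1)) ?_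
    filter_upwards [ae_restrict_mem measurableSet_Ioc] with x hx
    rw [Real.norm_eq_abs, abs_of_pos (hfpos x)]
    exact Real.exp_le_exp.2 (by linarith [hmin x (lt_trans hylev hx.1)])
  -- integrability: right, with dominating function
  set g : ℝ → ℝ := fun x => Real.exp (x₀ / b - m) * Real.exp (-b⁻¹ * x) with hgdef
  have hint_g : IntegrableOn g (Set.Ioi (y + δ)) :=
    (exp_neg_integrableOn_Ioi (y + δ) (inv_pos.2 hb0)).const_mul _
  have hfg : ∀ x ∈ Set.Ioi (y + δ), f x ≤ g x := by
    intro x hx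
    have h1 := hright x hx
    have : f x ≤ Real.exp (-(m + (x - x₀) / b)) := Real.exp_le_exp.2 (by linarith)
    refine this.trans (le_of_eq ?_)
    simp only [hgdef]
    rw [← Real.exp_add]
    congr 1
    field_simp
    ring
  have hint_right : IntegrableOn f (Set.Ioi (y + δ)) := by
    refine Integrable.mono' hint_g
      (hmeas _ measurableSet_Ioi (fun x hx => lt_trans (by linarith : (0:ℝ) < y + δ) hx)) ?_
    filter_upwards [ae_restrict_mem measurableSet_Ioi] with x hx
    rw [Real.norm_eq_abs, abs_of_pos (hfpos x)]
    exact hfg x hx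
  -- integrability: left
  have hint_left : IntegrableOn f (Set.Ioc 0 (y - δ)) := by
    refine Integrable.mono' (g := fun _ => Real.exp (-m))
      (integrableOn_const measure_Ioc_lt_top.ne)
      (hmeas _ measurableSet_Ioc (fun x hx => hx.1)) ?_
    filter_upwards [ae_restrict_mem measurableSet_Ioc] with x hx
    rw [Real.norm_eq_abs, abs_of_pos (hfpos x)]
    exact Real.exp_le_exp.2 (by linarith [hmin x hx.1])
  -- decomposition of the domain
  have hdecomp : Set.Ioi (0:ℝ) = (Set.Ioc 0 (y - δ) ∪ Set.Ioc (y - δ) (y + δ)) ∪ Set.Ioi (y + δ) := by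
    rw [Set.Ioc_union_Ioc_eq_Ioc hylev.le (by linarith), Set.Ioc_union_Ioi_eq_Ioi (by linarith)]
  have hint : IntegrableOn f (Set.Ioi 0) := by
    rw [hdecomp]; exact (hint_left.union hint_mid).union hint_right
  -- disjointness
  have hdisj1 : Disjoint (Set.Ioc (0:ℝ) (y - δ)) (Set.Ioc (y - δ) (y + δ)) := by
    rw [Set.disjoint_left]; rintro x ⟨_, h1⟩ ⟨h2, _⟩; linarith
  have hdisj2 : Disjoint (Set.Ioc (0:ℝ) (y - δ) ∪ Set.Ioc (y - δ) (y + δ)) (Set.Ioi (y + δ)) := by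
    rw [Set.disjoint_left]
    rintro x (⟨_, h1⟩ | ⟨_, h1⟩) h2 <;> [skip; skip] <;>
      · simp only [Set.mem_Ioi] at h2; linarith
  -- split the integral
  have hsplit : (∫ x in Set.Ioi (0:ℝ), f x) =
      (∫ x in Set.Ioc 0 (y - δ), f x) + (∫ x in Set.Ioc (y - δ) (y + δ), f x)
        + (∫ x in Set.Ioi (y + δ), f x) := by
    rw [hdecomp, setIntegral_union hdisj2 measurableSet_Ioi
      (hint_left.union hint_mid) hint_right,
      setIntegral_union hdisj1 measurableSet_Ioc hint_left hint_mid]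
  -- bound middle
  have hbound_mid : (∫ x in Set.Ioc (y - δ) (y + δ), f x) ≤ 2 * δ * Real.exp (-m) := by
    have h1 : (∫ x in Set.Ioc (y - δ) (y + δ), f x)
        ≤ ∫ _x in Set.Ioc (y - δ) (y + δ), Real.exp (-m) := by
      refine setIntegral_mono_on hint_mid (integrableOn_const measure_Ioc_lt_top.ne)
        measurableSet_Ioc ?_
      intro x hx
      exact Real.exp_le_exp.2 (by linarith [hmin x (lt_trans hylev hx.1)])
    rw [setIntegral_const, Real.volume_real_Ioc_of_le (by linarith : y - δ ≤ y + δ), smul_eq_mul] at h1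
    calc (∫ x in Set.Ioc (y - δ) (y + δ), f x) ≤ (y + δ - (y - δ)) * Real.exp (-m) := h1
    _ = 2 * δ * Real.exp (-m) := by ring
  -- bound right
  have hbound_right : (∫ x in Set.Ioi (y + δ), f x) ≤ b * Real.exp (-m - 1) := by
    have h1 : (∫ x in Set.Ioi (y + δ), f x) ≤ ∫ x in Set.Ioi (y + δ), g x :=
      setIntegral_mono_on hint_right hint_g measurableSet_Ioi hfg
    have h2 : (∫ x in Set.Ioi (y + δ), g x) = b * Real.exp (-m - 1) := by
      rw [hgdef]
      simp only
      rw [integral_const_mul]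
      have h3 : (∫ x in Set.Ioi (y + δ), Real.exp (-b⁻¹ * x))
          = (b⁻¹)⁻¹ • ∫ x in Set.Ioi (b⁻¹ * (y + δ)), Real.exp (-x) := by
        have := integral_comp_mul_left_Ioi (fun u => Real.exp (-u)) (y + δ) (inv_pos.2 hb0)
        simpa [neg_mul] using this
      rw [h3, integral_exp_neg_Ioi, inv_inv, smul_eq_mul, ← mul_assoc, mul_comm _ b, mul_assoc,
        ← Real.exp_add]
      congr 1
      rw [Real.exp_eq_exp]
      field_simp [hb0.ne']
      linarith [hbdef]
    linarith [h1, h2.le]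
  -- bound left
  have hbound_left : (∫ x in Set.Ioc 0 (y - δ), f x) ≤ c * Real.exp (-m - 1) := by
    set gl : ℝ → ℝ := fun x => Real.exp (-m - x₀ / c) * Real.exp (x / c) with hgldef
    have hglcont : Continuous gl := by
      exact continuous_const.mul (Real.continuous_exp.comp (continuous_id.div_const c))
    have hglint : IntegrableOn gl (Set.Ioc 0 (y - δ)) := hglcont.integrableOn_Ioc
    have h1 : (∫ x in Set.Ioc 0 (y - δ), f x) ≤ ∫ x in Set.Ioc 0 (y - δ), gl x := by
      rw [integral_Ioc_eq_integral_Ioo, integral_Ioc_eq_integral_Ioo (f := gl)]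
      refine setIntegral_mono_on (hint_left.mono_set Set.Ioo_subset_Ioc_self)
        (hglint.mono_set Set.Ioo_subset_Ioc_self) measurableSet_Ioo ?_
      intro x hx
      have h2 := hleft x hx.1 hx.2
      have : f x ≤ Real.exp (-(m + (x₀ - x) / c)) := Real.exp_le_exp.2 (by linarith)
      refine this.trans (le_of_eq ?_)
      simp only [hgldef]
      rw [← Real.exp_add]
      congr 1
      field_simp
      ring
    have h2 : (∫ x in Set.Ioc 0 (y - δ), gl x) ≤ c * Real.exp (-m - 1) := by
      rw [hgldef]
      simp only
      rw [integral_const_mul, ← intervalIntegral.integral_of_le hylev.le]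
      have h3 : (∫ x in (0:ℝ)..(y - δ), Real.exp (x / c))
          = c • ∫ x in (0:ℝ)/c..(y - δ)/c, Real.exp x :=
        intervalIntegral.integral_comp_div (a := (0:ℝ)) (b := y - δ) (c := c)
          (f := Real.exp) hc0.ne'
      rw [h3, integral_exp, smul_eq_mul, zero_div, Real.exp_zero]
      have hkey : Real.exp (-m - x₀ / c) * Real.exp ((y - δ) / c) = Real.exp (-m - 1) := by
        rw [← Real.exp_add]
        congr 1
        field_simp [hcdef]
        ring
      calc Real.exp (-m - x₀ / c) * (c * (Real.exp ((y - δ) / c) - 1))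
          ≤ Real.exp (-m - x₀ / c) * (c * Real.exp ((y - δ) / c)) := by
            have := Real.exp_pos (-m - x₀ / c)
            nlinarith [Real.exp_pos ((y - δ)/c)]
        _ = c * (Real.exp (-m - x₀ / c) * Real.exp ((y - δ) / c)) := by ring
        _ = c * Real.exp (-m - 1) := by rw [hkey]
    linarith
  -- total upper bound
  have hVle : V ≤ 2 * δ * (Real.exp (-m) + Real.exp (-m - 1)) := by
    have hsum : b * Real.exp (-m - 1) + c * Real.exp (-m - 1) = 2 * δ * Real.exp (-m - 1) := by
      rw [← hbc]; ring
    rw [← hV, hsplit]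
    have hexpand : 2 * δ * (Real.exp (-m) + Real.exp (-m - 1))
        = 2 * δ * Real.exp (-m) + 2 * δ * Real.exp (-m - 1) := by ring
    linarith [hbound_left, hbound_mid, hbound_right]
  constructor
  · -- lower bound
    have hIccsub : Set.Icc (x₀ - δ₀) (x₀ + δ₀) ⊆ Set.Ioi (0:ℝ) := fun x hx => (hincl hx).1
    have hconstint : IntegrableOn (fun _ : ℝ => Real.exp (-m - 1)) (Set.Icc (x₀ - δ₀) (x₀ + δ₀)) :=
      integrableOn_const measure_Icc_lt_top.ne
    have h1 : (∫ _x in Set.Icc (x₀ - δ₀) (x₀ + δ₀), Real.exp (-m - 1))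
        ≤ ∫ x in Set.Icc (x₀ - δ₀) (x₀ + δ₀), f x := by
      refine setIntegral_mono_on hconstint (hint.mono_set hIccsub) measurableSet_Icc ?_
      intro x hx
      exact Real.exp_le_exp.2 (by linarith [(hincl hx).2])
    have h2 : (∫ x in Set.Icc (x₀ - δ₀) (x₀ + δ₀), f x) ≤ ∫ x in Set.Ioi (0:ℝ), f x := by
      refine setIntegral_mono_set hint ?_ (HasSubset.Subset.eventuallyLE hIccsub)
      exact Filter.Eventually.of_forall (fun x => (hfpos x).le)
    rw [setIntegral_const, Real.volume_real_Icc_of_le (by linarith : x₀ - δ₀ ≤ x₀ + δ₀), smul_eq_mul] at h1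
    rw [← hV]
    calc 2 * δ₀ * Real.exp (-m - 1) = (x₀ + δ₀ - (x₀ - δ₀)) * Real.exp (-m - 1) := by ring
    _ ≤ ∫ x in Set.Icc (x₀ - δ₀) (x₀ + δ₀), f x := h1
    _ ≤ _ := h2
  · -- upper bound: V ≤ 2δ(e^{-m}+e^{-m-1}) ≤ 2δ e^{1-m} ≤ 2K e e^{-m/2}
    have step1 : Real.exp (-m) + Real.exp (-m - 1) ≤ Real.exp 1 * Real.exp (-m) := by
      have he1 : Real.exp (-m - 1) = Real.exp (-m) * Real.exp (-1) := by
        rw [← Real.exp_add]; ring_nf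
      have he2 : Real.exp (-1) ≤ 1 := Real.exp_le_one_iff.2 (by norm_num)
      have he3 : (2:ℝ) ≤ Real.exp 1 := by
        have := Real.add_one_le_exp (1:ℝ); linarith
      have hp := Real.exp_pos (-m)
      nlinarith
    have step2 : V ≤ 2 * δ * (Real.exp 1 * Real.exp (-m)) := by
      have := mul_le_mul_of_nonneg_left step1 (by linarith : (0:ℝ) ≤ 2 * δ)
      linarith [hVle]
    have step3 : 2 * δ * (Real.exp 1 * Real.exp (-m))
        ≤ 2 * (K * Real.exp (m / 2)) * (Real.exp 1 * Real.exp (-m)) := by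
      have hp : (0:ℝ) ≤ Real.exp 1 * Real.exp (-m) := by positivity
      exact mul_le_mul_of_nonneg_right (by linarith : 2 * δ ≤ 2 * (K * Real.exp (m / 2))) hp
    have step4 : 2 * (K * Real.exp (m / 2)) * (Real.exp 1 * Real.exp (-m))
        = 2 * K * Real.exp 1 * Real.exp (-m / 2) := by
      rw [show (-m / 2 : ℝ) = m / 2 + -m by ring, Real.exp_add]
      ring
    linarith [step2, step3, step4.le]
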